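/- In the wide-range regret setting with collection H ⊆ M × F of modification rule–subsequence pairs: for any transcript, R^T_wide ≤ |A| · R^T_{H_wide}, where H_wide := ∪_{(μ,f)∈H} ∪_{j∈A} {(j, φ^{(μ,f)}_j)} with φ^{(μ,f)}_j(t,a) := f(t,a)·1[μ(t,a)=j], so that |H_wide| = |A|·|H|. Consequently there exists an algorithm for the Learner guaranteeing, against any adaptive Adversary, E[R^T_wide] ≤ 4|A|·√(T·(ln|A| + ln|H|)). -/

import Mathlib

open scoped BigOperators

noncomputable section

/-- The prefix of a full transcript `a` before round `t`. -/
def transcriptPrefix {A : Type*} {T : ℕ} (a : Fin T → A) (t : Fin T) : Fin t.1 → A :=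
  fun s => a ⟨s.1, s.2.trans t.2⟩

/-- The prefix of a history `h` before its `s`-th entry. -/
def historyPrefix {A : Type*} {m : ℕ} (h : Fin m → A) (s : Fin m) : Fin s.1 → A :=
  fun u => h ⟨u.1, u.2.trans s.2⟩

/-- A learner's algorithm in the experts setting: at round `t` it maps the realized
history of its actions and the past loss vectors to a distribution over actions. -/
def ExpertStrategy (A : Type) (T : ℕ) : Type :=
  ∀ t : Fin T, (Fin t.1 → A) → (Fin t.1 → A → ℝ) → A → ℝ

/-- The per-round play induced by a strategy `σ` against the adaptive Adversary `r`. -/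
noncomputable def playOf {A : Type} {T : ℕ} (σ : ExpertStrategy A T)
    (r : ∀ t : Fin T, (Fin t.1 → A) → A → ℝ)
    (t : Fin T) (h : Fin t.1 → A) : A → ℝ :=
  σ t h (fun s => r ⟨s.1, s.2.trans t.2⟩ (historyPrefix h s))

/-- The probability of a full transcript `a` when the Learner plays the per-round
distributions `x`. -/
noncomputable def transcriptProb {A : Type} [Fintype A] {T : ℕ}
    (x : ∀ t : Fin T, (Fin t.1 → A) → A → ℝ) (a : Fin T → A) : ℝ :=
  ∏ t, x t (transcriptPrefix a t) (a t)

set_option linter.unusedSectionVars false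

lemma exp_le_quadratic {x : ℝ} (hx : |x| ≤ 1) : Real.exp x ≤ 1 + x + x ^ 2 := by
  have h := Real.exp_bound hx (n := 2) (by norm_num)
  have h1 : ∑ m ∈ Finset.range 2, x ^ m / m.factorial = 1 + x := by
    simp [Finset.sum_range_succ]
  rw [h1] at h
  have h2 := (abs_sub_le_iff.1 h).1
  have h3 : |x| ^ 2 = x ^ 2 := sq_abs x
  norm_num [Nat.factorial] at h2
  nlinarith [sq_nonneg x]

open Filter Topology in
lemma exists_stationary {A : Type} [Fintype A] [Nonempty A]
    (P : A → A → ℝ) (hP : ∀ a b, 0 ≤ P a b) (hrow : ∀ a, ∑ b, P a b = 1) :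
    ∃ x : A → ℝ, (∀ a, 0 ≤ x a) ∧ (∑ a, x a = 1) ∧ ∀ a, ∑ b, x b * P b a = x a := by
  classical
  set L : (A → ℝ) → (A → ℝ) := fun x a => ∑ b, x b * P b a with hL
  have hLcont : Continuous L := by
    apply continuous_pi
    intro a
    exact continuous_finset_sum _ fun b _ => (continuous_apply b).mul continuous_const
  have hLmem : ∀ x ∈ stdSimplex ℝ A, L x ∈ stdSimplex ℝ A := by
    intro x hx
    refine ⟨fun a => Finset.sum_nonneg fun b _ => mul_nonneg (hx.1 b) (hP b a), ?_⟩
    calc ∑ a, ∑ b, x b * P b a = ∑ b, ∑ a, x b * P b a := Finset.sum_comm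
    _ = ∑ b, x b * ∑ a, P b a := by simp [Finset.mul_sum]
    _ = ∑ b, x b := by simp [hrow]
    _ = 1 := hx.2
  set v0 : A → ℝ := fun _ => (Fintype.card A : ℝ)⁻¹ with hv0
  have hv0mem : v0 ∈ stdSimplex ℝ A := by
    constructor
    · intro a; positivity
    · simp [hv0, Finset.sum_const]
  set u : ℕ → (A → ℝ) := fun n => L^[n] v0 with hu
  have humem : ∀ n, u n ∈ stdSimplex ℝ A := by
    intro n
    induction n with
    | zero => simpa [hu] using hv0mem
    | succ n ih =>
      have : u (n+1) = L (u n) := Function.iterate_succ_apply' L n v0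
      rw [this]; exact hLmem _ ih
  have husucc : ∀ n, u (n+1) = L (u n) := fun n => Function.iterate_succ_apply' L n v0
  set v : ℕ → (A → ℝ) := fun n => ((n : ℝ)+1)⁻¹ • ∑ k ∈ Finset.range (n+1), u k with hv
  have hvmem : ∀ n, v n ∈ stdSimplex ℝ A := by
    intro n
    have hn : (0:ℝ) < (n:ℝ)+1 := by positivity
    constructor
    · intro a
      simp only [hv, Pi.smul_apply, smul_eq_mul]
      have : (0:ℝ) ≤ (∑ k ∈ Finset.range (n+1), u k) a := by
        rw [Finset.sum_apply]
        exact Finset.sum_nonneg fun k _ => (humem k).1 a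
      positivity
    · simp only [hv, Pi.smul_apply, smul_eq_mul]
      rw [← Finset.mul_sum]
      have : ∑ a, (∑ k ∈ Finset.range (n+1), u k) a = (n+1 : ℝ) := by
        simp only [Finset.sum_apply]
        rw [Finset.sum_comm]
        have : ∀ k ∈ Finset.range (n+1), ∑ a, u k a = 1 := fun k _ => (humem k).2
        rw [Finset.sum_congr rfl this]
        simp
      rw [this]
      field_simp
  -- key identity
  have hkey : ∀ n, L (v n) = v n + ((n : ℝ)+1)⁻¹ • (u (n+1) - u 0) := by
    intro n
    funext a
    simp only [hL, hv, Pi.add_apply, Pi.smul_apply, Pi.sub_apply, smul_eq_mul,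
      Finset.sum_apply]
    have lhs : ∑ b, (((n:ℝ)+1)⁻¹ * ∑ k ∈ Finset.range (n+1), u k b) * P b a
        = ((n:ℝ)+1)⁻¹ * ∑ k ∈ Finset.range (n+1), (u (k+1)) a := by
      rw [Finset.mul_sum]
      calc ∑ b, (((n:ℝ)+1)⁻¹ * ∑ k ∈ Finset.range (n+1), u k b) * P b a
          = ∑ b, ∑ k ∈ Finset.range (n+1), ((n:ℝ)+1)⁻¹ * (u k b * P b a) := by
            apply Finset.sum_congr rfl; intro b _
            rw [Finset.mul_sum, Finset.sum_mul]
            apply Finset.sum_congr rfl; intro k _; ring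
        _ = ∑ k ∈ Finset.range (n+1), ∑ b, ((n:ℝ)+1)⁻¹ * (u k b * P b a) :=
            Finset.sum_comm
        _ = ∑ k ∈ Finset.range (n+1), ((n:ℝ)+1)⁻¹ * u (k+1) a := by
            apply Finset.sum_congr rfl; intro k _
            rw [← Finset.mul_sum, husucc k]
    rw [lhs]
    have tel : ∑ k ∈ Finset.range (n+1), u (k+1) a
        = (∑ k ∈ Finset.range (n+1), u k a) + u (n+1) a - u 0 a := by
      have e1 := Finset.sum_range_succ' (fun k => u k a) (n+1)
      have e2 := Finset.sum_range_succ (fun k => u k a) (n+1)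
      linarith
    rw [tel]
    ring
  obtain ⟨x, hxmem, φ, hφ, hconv⟩ := (isCompact_stdSimplex ℝ A).tendsto_subseq hvmem
  have hbound : ∀ n a, |u n a - u 0 a| ≤ 2 := by
    intro n a
    have h1 : 0 ≤ u n a := (humem n).1 a
    have h2 : u n a ≤ 1 := by
      have := Finset.single_le_sum (f := fun b => u n b) (fun b _ => (humem n).1 b)
        (Finset.mem_univ a)
      rw [(humem n).2] at this; exact this
    have h3 : 0 ≤ u 0 a := (humem 0).1 a
    have h4 : u 0 a ≤ 1 := by
      have := Finset.single_le_sum (f := fun b => u 0 b) (fun b _ => (humem 0).1 b)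
        (Finset.mem_univ a)
      rw [(humem 0).2] at this; exact this
    rw [abs_le]; constructor <;> linarith
  have hεzero : Tendsto (fun n => ((φ n : ℝ)+1)⁻¹ • (u (φ n + 1) - u 0)) atTop (𝓝 0) := by
    rw [tendsto_pi_nhds]
    intro a
    simp only [Pi.smul_apply, Pi.sub_apply, smul_eq_mul, Pi.zero_apply]
    have hg : Tendsto (fun n => 2 * ((φ n : ℝ)+1)⁻¹) atTop (𝓝 0) := by
      have h1 : Tendsto (fun n => ((φ n : ℝ)+1)) atTop atTop := by
        apply tendsto_atTop_add_const_right
        exact tendsto_natCast_atTop_atTop.comp hφ.tendsto_atTop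
      have := h1.inv_tendsto_atTop
      simpa using this.const_mul (2:ℝ)
    apply squeeze_zero_norm _ hg
    intro n
    rw [Real.norm_eq_abs, abs_mul]
    have h1 : |((φ n : ℝ)+1)⁻¹| = ((φ n : ℝ)+1)⁻¹ := abs_of_nonneg (by positivity)
    rw [h1]
    have := hbound (φ n + 1) a
    have h2 : (0:ℝ) ≤ ((φ n : ℝ)+1)⁻¹ := by positivity
    calc ((φ n : ℝ)+1)⁻¹ * |u (φ n + 1) a - u 0 a| ≤ ((φ n : ℝ)+1)⁻¹ * 2 :=
      mul_le_mul_of_nonneg_left this h2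
    _ = 2 * ((φ n : ℝ)+1)⁻¹ := by ring
  have ht1 : Tendsto (fun n => L (v (φ n))) atTop (𝓝 (L x)) :=
    (hLcont.tendsto x).comp hconv
  have ht2 : Tendsto (fun n => L (v (φ n))) atTop (𝓝 x) := by
    have : (fun n => L (v (φ n))) =
        fun n => v (φ n) + ((φ n : ℝ)+1)⁻¹ • (u (φ n + 1) - u 0) := by
      funext n; exact hkey (φ n)
    rw [this]
    have := hconv.add hεzero
    simpa using this
  have hfix : L x = x := tendsto_nhds_unique ht1 ht2
  exact ⟨x, hxmem.1, hxmem.2, fun a => congrFun hfix a⟩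

lemma exists_fixedpoint {A : Type} [Fintype A] [Nonempty A] [DecidableEq A]
    (M : A → A → ℝ) (hM : ∀ a b, 0 ≤ M a b) :
    ∃ x : A → ℝ, (∀ a, 0 ≤ x a) ∧ (∑ a, x a = 1) ∧
      ∀ a, x a * (∑ j, M a j) = ∑ b, x b * M b a := by
  classical
  set S : A → ℝ := fun a => ∑ j, M a j with hS
  have hS0 : ∀ a, 0 ≤ S a := fun a => Finset.sum_nonneg fun j _ => hM a j
  set C : ℝ := (∑ a, S a) + 1 with hC
  have hCpos : 0 < C := by
    have : 0 ≤ ∑ a, S a := Finset.sum_nonneg fun a _ => hS0 a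
    linarith
  have hSC : ∀ a, S a ≤ C := by
    intro a
    have := Finset.single_le_sum (f := S) (fun b _ => hS0 b) (Finset.mem_univ a)
    linarith
  set P : A → A → ℝ := fun a b => M a b / C + (if a = b then 1 - S a / C else 0) with hP
  have hPnn : ∀ a b, 0 ≤ P a b := by
    intro a b
    simp only [hP]
    by_cases h : a = b
    · simp only [h, if_true]
      have h1 : S b / C ≤ 1 := by
        rw [div_le_one hCpos]; exact h ▸ hSC a
      have h2 : 0 ≤ M b b / C := div_nonneg (hM b b) hCpos.le
      subst h; linarith
    · simp only [h, if_false, add_zero]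
      exact div_nonneg (hM a b) hCpos.le
  have hProw : ∀ a, ∑ b, P a b = 1 := by
    intro a
    simp only [hP]
    rw [Finset.sum_add_distrib]
    rw [Finset.sum_ite_eq Finset.univ a (fun _ => 1 - S a / C)]
    simp only [Finset.mem_univ, if_true]
    rw [← Finset.sum_div]
    have hSa : ∑ i : A, M a i = S a := rfl
    rw [hSa]
    field_simp
    ring
  obtain ⟨x, hx0, hx1, hxfix⟩ := exists_stationary P hPnn hProw
  refine ⟨x, hx0, hx1, ?_⟩
  intro a
  have h := hxfix a
  simp only [hP] at h
  have hexpand : ∑ b, x b * (M b a / C + (if b = a then 1 - S b / C else 0))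
      = (∑ b, x b * M b a) / C + x a * (1 - S a / C) := by
    rw [Finset.sum_congr rfl fun b _ => mul_add (x b) (M b a / C) _]
    rw [Finset.sum_add_distrib]
    congr 1
    · rw [Finset.sum_div]
      apply Finset.sum_congr rfl
      intro b _; ring
    · have : ∀ b, x b * (if b = a then 1 - S b / C else 0)
          = if b = a then x a * (1 - S a / C) else 0 := by
        intro b
        by_cases h' : b = a
        · subst h'; simp
        · simp [h']
      rw [Finset.sum_congr rfl fun b _ => this b]
      rw [Finset.sum_ite_eq' Finset.univ a (fun _ => x a * (1 - S a / C))]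
      simp
  rw [hexpand] at h
  have := hCpos.ne'
  field_simp at h ⊢
  linarith [h]

lemma snoc_eval {A : Type} {n : ℕ} (h : Fin n → A) (b : A) (i : Fin (n+1))
    (hi : i.1 < n) : (Fin.snoc h b : Fin (n+1) → A) i = h ⟨i.1, hi⟩ := by
  simp [Fin.snoc, hi]
  rfl

lemma prefix_snoc_castSucc {A : Type} {n : ℕ} (h : Fin n → A) (b : A) (t : Fin n) :
    transcriptPrefix ((Fin.snoc h b : Fin (n+1) → A)) t.castSucc = transcriptPrefix h t := by
  funext s
  exact snoc_eval h b _ (s.2.trans t.2)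

lemma prefix_snoc_last {A : Type} {n : ℕ} (h : Fin n → A) (b : A) :
    transcriptPrefix ((Fin.snoc h b : Fin (n+1) → A)) (Fin.last n) = h := by
  funext s
  exact snoc_eval h b _ s.2

lemma chain_le {A : Type} [Fintype A] :
    ∀ (n : ℕ) (x : ∀ t : Fin n, (Fin t.1 → A) → A → ℝ),
      (∀ t h b, 0 ≤ x t h b) →
      ∀ (Φ : ∀ m : ℕ, m ≤ n → (Fin m → A) → ℝ) (K : ℝ), 0 ≤ K →
      (∀ (t : Fin n) (h : Fin t.1 → A),
        ∑ b, x t h b * Φ (t.1+1) t.2 ((Fin.snoc h b : Fin (t.1+1) → A)) ≤ K * Φ t.1 (le_of_lt t.2) h) →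
      ∑ a : Fin n → A, (∏ t, x t (transcriptPrefix a t) (a t)) * Φ n le_rfl a
        ≤ K ^ n * Φ 0 (Nat.zero_le n) default := by
  intro n
  induction n with
  | zero =>
    intro x hx Φ K hK step
    rw [Fintype.sum_unique]
    simp
  | succ n IH =>
    intro x hx Φ K hK step
    set e : A × (Fin n → A) ≃ (Fin (n+1) → A) := Fin.snocEquiv (fun _ => A) with he
    have key : ∀ (h : Fin n → A) (b : A),
        (∏ t : Fin (n+1), x t (transcriptPrefix ((Fin.snoc h b : Fin (n+1) → A)) t) ((Fin.snoc h b : Fin (n+1) → A) t))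
        = (∏ t : Fin n, x t.castSucc (transcriptPrefix h t) (h t)) *
            x (Fin.last n) h b := by
      intro h b
      rw [Fin.prod_univ_castSucc]
      congr 1
      · apply Finset.prod_congr rfl
        intro t _
        rw [prefix_snoc_castSucc, Fin.snoc_castSucc]
      · rw [prefix_snoc_last, Fin.snoc_last]
    calc ∑ a : Fin (n+1) → A, (∏ t, x t (transcriptPrefix a t) (a t)) * Φ (n+1) le_rfl a
        = ∑ p : A × (Fin n → A),
            (∏ t, x t (transcriptPrefix (e p) t) ((e p) t)) * Φ (n+1) le_rfl (e p) :=
          (Equiv.sum_comp e fun a => (∏ t, x t (transcriptPrefix a t) (a t)) *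
            Φ (n+1) le_rfl a).symm
      _ = ∑ b : A, ∑ h : Fin n → A,
            (∏ t, x t (transcriptPrefix (e (b, h)) t) ((e (b, h)) t)) *
              Φ (n+1) le_rfl (e (b, h)) :=
          Fintype.sum_prod_type _
      _ = ∑ b : A, ∑ h : Fin n → A,
            (∏ t, x t (transcriptPrefix ((Fin.snoc h b : Fin (n+1) → A)) t) ((Fin.snoc h b : Fin (n+1) → A) t)) *
              Φ (n+1) le_rfl ((Fin.snoc h b : Fin (n+1) → A)) := rfl
      _ = ∑ h : Fin n → A, ∑ b : A,
            (∏ t, x t (transcriptPrefix ((Fin.snoc h b : Fin (n+1) → A)) t) ((Fin.snoc h b : Fin (n+1) → A) t)) *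
              Φ (n+1) le_rfl ((Fin.snoc h b : Fin (n+1) → A)) := Finset.sum_comm
      _ = ∑ h : Fin n → A, (∏ t : Fin n, x t.castSucc (transcriptPrefix h t) (h t)) *
            ∑ b : A, x (Fin.last n) h b * Φ (n+1) le_rfl ((Fin.snoc h b : Fin (n+1) → A)) := by
          apply Finset.sum_congr rfl
          intro h _
          rw [Finset.mul_sum]
          apply Finset.sum_congr rfl
          intro b _
          rw [key h b]
          ring
      _ ≤ ∑ h : Fin n → A, (∏ t : Fin n, x t.castSucc (transcriptPrefix h t) (h t)) *
            (K * Φ n n.le_succ h) := by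
          apply Finset.sum_le_sum
          intro h _
          apply mul_le_mul_of_nonneg_left _ (Finset.prod_nonneg fun t _ => hx _ _ _)
          exact step (Fin.last n) h
      _ = K * ∑ h : Fin n → A,
            (∏ t : Fin n, x t.castSucc (transcriptPrefix h t) (h t)) * Φ n n.le_succ h := by
          rw [Finset.mul_sum]
          apply Finset.sum_congr rfl
          intro h _
          ring
      _ ≤ K * (K ^ n * Φ 0 (Nat.zero_le (n+1)) default) := by
          apply mul_le_mul_of_nonneg_left _ hK
          exact IH (fun t => x t.castSucc) (fun t h b => hx _ _ _)
            (fun m hm => Φ m (hm.trans n.le_succ)) K hK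
            (fun t h => step t.castSucc h)
      _ = K ^ (n+1) * Φ 0 (Nat.zero_le (n+1)) default := by ring

lemma chain_eq_one {A : Type} [Fintype A] :
    ∀ (n : ℕ) (x : ∀ t : Fin n, (Fin t.1 → A) → A → ℝ),
      (∀ t h, ∑ b, x t h b = 1) →
      ∑ a : Fin n → A, (∏ t, x t (transcriptPrefix a t) (a t)) = 1 := by
  intro n
  induction n with
  | zero =>
    intro x hx
    rw [Fintype.sum_unique]
    simp
  | succ n IH =>
    intro x hx
    set e : A × (Fin n → A) ≃ (Fin (n+1) → A) := Fin.snocEquiv (fun _ => A) with he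
    have key : ∀ (h : Fin n → A) (b : A),
        (∏ t : Fin (n+1), x t (transcriptPrefix ((Fin.snoc h b : Fin (n+1) → A)) t) ((Fin.snoc h b : Fin (n+1) → A) t))
        = (∏ t : Fin n, x t.castSucc (transcriptPrefix h t) (h t)) *
            x (Fin.last n) h b := by
      intro h b
      rw [Fin.prod_univ_castSucc]
      congr 1
      · apply Finset.prod_congr rfl
        intro t _
        rw [prefix_snoc_castSucc, Fin.snoc_castSucc]
      · rw [prefix_snoc_last, Fin.snoc_last]
    calc ∑ a : Fin (n+1) → A, (∏ t, x t (transcriptPrefix a t) (a t))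
        = ∑ p : A × (Fin n → A), (∏ t, x t (transcriptPrefix (e p) t) ((e p) t)) :=
          (Equiv.sum_comp e fun a => (∏ t, x t (transcriptPrefix a t) (a t))).symm
      _ = ∑ b : A, ∑ h : Fin n → A,
            (∏ t, x t (transcriptPrefix (e (b, h)) t) ((e (b, h)) t)) :=
          Fintype.sum_prod_type _
      _ = ∑ b : A, ∑ h : Fin n → A,
            (∏ t, x t (transcriptPrefix ((Fin.snoc h b : Fin (n+1) → A)) t) ((Fin.snoc h b : Fin (n+1) → A) t)) := rfl
      _ = ∑ h : Fin n → A, ∑ b : A,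
            (∏ t, x t (transcriptPrefix ((Fin.snoc h b : Fin (n+1) → A)) t) ((Fin.snoc h b : Fin (n+1) → A) t)) :=
          Finset.sum_comm
      _ = ∑ h : Fin n → A, (∏ t : Fin n, x t.castSucc (transcriptPrefix h t) (h t)) := by
          apply Finset.sum_congr rfl
          intro h _
          rw [Finset.sum_congr rfl fun b _ => key h b, ← Finset.mul_sum, hx, mul_one]
      _ = 1 := IH (fun t => x t.castSucc) (fun t h => hx t.castSucc h)

/-! ### The exponential-weights / fixed-point machinery -/

section EW

variable {A : Type} [Fintype A] [Nonempty A] [DecidableEq A]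
  {ιM ιF : Type} {T : ℕ}

/-- Cumulative (weighted) regret of modification pair `p` on history `h`. -/
def ewX (μf : ιM → Fin T → A → A) (fv : ιF → Fin T → A → ℝ)
    (r : ∀ t : Fin T, (Fin t.1 → A) → A → ℝ) (m : ℕ) (hm : m ≤ T) (h : Fin m → A)
    (p : ιM × ιF) : ℝ :=
  ∑ s : Fin m, fv p.2 ⟨s.1, lt_of_lt_of_le s.2 hm⟩ (h s) *
    (r ⟨s.1, lt_of_lt_of_le s.2 hm⟩ (historyPrefix h s) (h s) -
     r ⟨s.1, lt_of_lt_of_le s.2 hm⟩ (historyPrefix h s)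
       (μf p.1 ⟨s.1, lt_of_lt_of_le s.2 hm⟩ (h s)))

/-- One-round regret increment. -/
def ewD (μf : ιM → Fin T → A → A) (fv : ιF → Fin T → A → ℝ)
    (r : ∀ t : Fin T, (Fin t.1 → A) → A → ℝ) (t : Fin T) (h : Fin t.1 → A) (b : A)
    (p : ιM × ιF) : ℝ :=
  fv p.2 t b * (r t h b - r t h (μf p.1 t b))

/-- The exponential potential. -/
def ewPhi (μf : ιM → Fin T → A → A) (fv : ιF → Fin T → A → ℝ)
    (r : ∀ t : Fin T, (Fin t.1 → A) → A → ℝ) (H : Finset (ιM × ιF)) (η : ℝ)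
    (m : ℕ) (hm : m ≤ T) (h : Fin m → A) : ℝ :=
  ∑ p ∈ H, Real.exp (η * ewX μf fv r m hm h p)

/-- The weight of pair `p` computed from the observed past losses. -/
def ewW (μf : ιM → Fin T → A → A) (fv : ιF → Fin T → A → ℝ) (η : ℝ)
    (t : Fin T) (h : Fin t.1 → A) (past : Fin t.1 → A → ℝ) (p : ιM × ιF) : ℝ :=
  Real.exp (η * ∑ s : Fin t.1, fv p.2 ⟨s.1, s.2.trans t.2⟩ (h s) *
    (past s (h s) - past s (μf p.1 ⟨s.1, s.2.trans t.2⟩ (h s))))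

/-- The nonnegative matrix used for the fixed-point computation. -/
def ewM (μf : ιM → Fin T → A → A) (fv : ιF → Fin T → A → ℝ) (H : Finset (ιM × ιF))
    (η : ℝ) (t : Fin T) (h : Fin t.1 → A) (past : Fin t.1 → A → ℝ) (b j : A) : ℝ :=
  ∑ p ∈ H, ewW μf fv η t h past p * (fv p.2 t b * (if μf p.1 t b = j then 1 else 0))

lemma ewM_nonneg {μf : ιM → Fin T → A → A} {fv : ιF → Fin T → A → ℝ}
    (hfv0 : ∀ k t a, 0 ≤ fv k t a) (H : Finset (ιM × ιF)) (η : ℝ) (t : Fin T)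
    (h : Fin t.1 → A) (past : Fin t.1 → A → ℝ) (b j : A) :
    0 ≤ ewM μf fv H η t h past b j := by
  apply Finset.sum_nonneg
  intro p _
  apply mul_nonneg (Real.exp_pos _).le
  apply mul_nonneg (hfv0 _ _ _)
  positivity

/-- The fixed-point strategy. -/
noncomputable def ewStrategy (μf : ιM → Fin T → A → A) (fv : ιF → Fin T → A → ℝ)
    (hfv0 : ∀ k t a, 0 ≤ fv k t a) (H : Finset (ιM × ιF)) (η : ℝ) :
    ExpertStrategy A T :=
  fun t h past => Classical.choose
    (exists_fixedpoint (ewM μf fv H η t h past) (ewM_nonneg hfv0 H η t h past))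

lemma ewStrategy_spec (μf : ιM → Fin T → A → A) (fv : ιF → Fin T → A → ℝ)
    (hfv0 : ∀ k t a, 0 ≤ fv k t a) (H : Finset (ιM × ιF)) (η : ℝ) (t : Fin T)
    (h : Fin t.1 → A) (past : Fin t.1 → A → ℝ) :
    (∀ j, 0 ≤ ewStrategy μf fv hfv0 H η t h past j) ∧
    (∑ j, ewStrategy μf fv hfv0 H η t h past j = 1) ∧
    (∀ b, ewStrategy μf fv hfv0 H η t h past b * (∑ j, ewM μf fv H η t h past b j)
      = ∑ b', ewStrategy μf fv hfv0 H η t h past b' * ewM μf fv H η t h past b' b) :=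
  Classical.choose_spec
    (exists_fixedpoint (ewM μf fv H η t h past) (ewM_nonneg hfv0 H η t h past))

/-- Weights computed from the true past losses agree with the potential weights. -/
lemma ewW_play (μf : ιM → Fin T → A → A) (fv : ιF → Fin T → A → ℝ) (η : ℝ)
    (r : ∀ t : Fin T, (Fin t.1 → A) → A → ℝ) (t : Fin T) (h : Fin t.1 → A)
    (p : ιM × ιF) :
    ewW μf fv η t h (fun s => r ⟨s.1, s.2.trans t.2⟩ (historyPrefix h s)) p
      = Real.exp (η * ewX μf fv r t.1 (le_of_lt t.2) h p) := rfl

lemma ewX_snoc (μf : ιM → Fin T → A → A) (fv : ιF → Fin T → A → ℝ)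
    (r : ∀ t : Fin T, (Fin t.1 → A) → A → ℝ) (t : Fin T) (h : Fin t.1 → A) (b : A)
    (p : ιM × ιF) :
    ewX μf fv r (t.1+1) t.2 (Fin.snoc h b : Fin (t.1+1) → A) p
      = ewX μf fv r t.1 (le_of_lt t.2) h p + ewD μf fv r t h b p := by
  unfold ewX ewD
  rw [Fin.sum_univ_castSucc]
  congr 1
  · apply Finset.sum_congr rfl
    intro s _
    have e1 : historyPrefix (Fin.snoc h b : Fin (t.1+1) → A) s.castSucc
        = historyPrefix h s :=
      funext fun u => snoc_eval h b _ (u.2.trans s.2)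
    rw [e1, Fin.snoc_castSucc]
    rfl
  · have e1 : historyPrefix (Fin.snoc h b : Fin (t.1+1) → A) (Fin.last t.1) = h :=
      funext fun u => snoc_eval h b _ u.2
    rw [e1, Fin.snoc_last]
    rfl

end EW

/-- Pointwise bound: the wide-range regret of any transcript is at most `T`. -/
lemma regret_le_T {A : Type} [Fintype A] {ιM ιF : Type} {T : ℕ}
    (μf : ιM → Fin T → A → A) (fv : ιF → Fin T → A → ℝ)
    (hfv : ∀ k t a, fv k t a ∈ Set.Icc (0 : ℝ) 1)
    (H : Finset (ιM × ιF)) (hH : H.Nonempty)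
    (a : Fin T → A) (r : ∀ t : Fin T, (Fin t.1 → A) → A → ℝ)
    (hr : ∀ t h j, r t h j ∈ Set.Icc (0 : ℝ) 1) :
    (H.sup' hH fun p => ∑ t, fv p.2 t (a t) *
        (r t (transcriptPrefix a t) (a t) -
          r t (transcriptPrefix a t) (μf p.1 t (a t)))) ≤ (T : ℝ) := by
  apply Finset.sup'_le
  intro p _
  calc ∑ t, fv p.2 t (a t) * (r t (transcriptPrefix a t) (a t) -
        r t (transcriptPrefix a t) (μf p.1 t (a t)))
      ≤ ∑ _t : Fin T, (1:ℝ) := by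
        apply Finset.sum_le_sum
        intro t _
        have h1 := hfv p.2 t (a t)
        have h2 := hr t (transcriptPrefix a t) (a t)
        have h3 := hr t (transcriptPrefix a t) (μf p.1 t (a t))
        simp only [Set.mem_Icc] at h1 h2 h3
        nlinarith [h1.1, h1.2, h2.1, h2.2, h3.1, h3.2]
    _ = (T : ℝ) := by simp

set_option maxHeartbeats 1200000

/-- In the wide-range regret setting with modification rules `μf`
(indexed by `ιM`), subsequence weights `fv` (indexed by `ιF`) and a collection
`H ⊆ M × F`: (i) for any transcript, `R^T_wide ≤ |A| · R^T_{H_wide}`, where `H_wide`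
consists of the pairs `(j, φ^{(μ,f)}_j)` with `φ^{(μ,f)}_j(t,a) = f(t,a)·1[μ(t,a)=j]`
for `(μ,f) ∈ H` and `j ∈ A`; (ii) consequently there exists an algorithm for the Learner
guaranteeing, against any adaptive Adversary,
`E[R^T_wide] ≤ 4|A|√(T(ln|A| + ln|H|))`. -/
theorem wide_range_regret_bound
    (A : Type) [Fintype A] [Nonempty A] [DecidableEq A]
    (ιM ιF : Type) [Fintype ιM] [Fintype ιF] (T : ℕ)
    (μf : ιM → Fin T → A → A)               -- the modification rules M
    (fv : ιF → Fin T → A → ℝ)               -- the subsequence weight functions F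
    (hfv : ∀ k t a, fv k t a ∈ Set.Icc (0 : ℝ) 1)
    (H : Finset (ιM × ιF)) (hH : H.Nonempty) :
    -- (i) pointwise reduction of wide-range regret to subsequence regret over H_wide
    (∀ (a : Fin T → A) (r : Fin T → A → ℝ), (∀ t j, r t j ∈ Set.Icc (0 : ℝ) 1) →
      (H.sup' hH fun p => ∑ t, fv p.2 t (a t) * (r t (a t) - r t (μf p.1 t (a t)))) ≤
        (Fintype.card A) *
          ((H ×ˢ (Finset.univ : Finset A)).sup' (hH.product Finset.univ_nonempty)
            fun q => ∑ t, fv q.1.2 t (a t) * (if μf q.1.1 t (a t) = q.2 then 1 else 0) *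
              (r t (a t) - r t q.2))) ∧
    -- (ii) existence of a no-wide-range-regret algorithm
    (∃ σ : ExpertStrategy A T,
        (∀ t h past, (∀ j, 0 ≤ σ t h past j) ∧ ∑ j, σ t h past j = 1) ∧
        ∀ r : ∀ t : Fin T, (Fin t.1 → A) → A → ℝ,
          (∀ t h j, r t h j ∈ Set.Icc (0 : ℝ) 1) →
          ∑ a : Fin T → A, transcriptProb (playOf σ r) a *
              (H.sup' hH fun p => ∑ t, fv p.2 t (a t) *
                (r t (transcriptPrefix a t) (a t) -
                  r t (transcriptPrefix a t) (μf p.1 t (a t)))) ≤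
            4 * (Fintype.card A) *
              Real.sqrt (T * (Real.log (Fintype.card A) + Real.log H.card))) := by
  classical
  have hfv0 : ∀ k t a, 0 ≤ fv k t a := fun k t a => (hfv k t a).1
  have hcard1 : 1 ≤ Fintype.card A := Fintype.card_pos
  have hHcard1 : 1 ≤ H.card := Finset.card_pos.mpr hH
  have hRHS0 : 0 ≤ 4 * (Fintype.card A : ℝ) *
      Real.sqrt (T * (Real.log (Fintype.card A) + Real.log H.card)) := by
    apply mul_nonneg
    · positivity
    · exact Real.sqrt_nonneg _
  constructor
  · -- part (i)
    intro a r hr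
    set S := (H ×ˢ (Finset.univ : Finset A)).sup' (hH.product Finset.univ_nonempty)
      fun q => ∑ t, fv q.1.2 t (a t) * (if μf q.1.1 t (a t) = q.2 then 1 else 0) *
        (r t (a t) - r t q.2) with hS
    apply Finset.sup'_le
    intro p hp
    have hsplit : ∑ t, fv p.2 t (a t) * (r t (a t) - r t (μf p.1 t (a t)))
        = ∑ j : A, ∑ t, fv p.2 t (a t) * (if μf p.1 t (a t) = j then 1 else 0) *
            (r t (a t) - r t j) := by
      rw [Finset.sum_comm]
      apply Finset.sum_congr rfl
      intro t _
      have h1 : ∀ j : A, fv p.2 t (a t) * (if μf p.1 t (a t) = j then 1 else 0) *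
          (r t (a t) - r t j)
          = if μf p.1 t (a t) = j then fv p.2 t (a t) * (r t (a t) - r t j) else 0 := by
        intro j; by_cases h : μf p.1 t (a t) = j <;> simp [h]
      rw [Finset.sum_congr rfl fun j _ => h1 j]
      rw [Finset.sum_ite_eq Finset.univ (μf p.1 t (a t))
        (fun j => fv p.2 t (a t) * (r t (a t) - r t j))]
      simp
    rw [hsplit]
    have hbound : ∀ j : A, (∑ t, fv p.2 t (a t) * (if μf p.1 t (a t) = j then 1 else 0) *
        (r t (a t) - r t j)) ≤ S := by
      intro j
      rw [hS]
      exact Finset.le_sup' (fun q : (ιM × ιF) × A => ∑ t, fv q.1.2 t (a t) *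
        (if μf q.1.1 t (a t) = q.2 then 1 else 0) * (r t (a t) - r t q.2))
        (Finset.mk_mem_product hp (Finset.mem_univ j))
    calc ∑ j : A, ∑ t, fv p.2 t (a t) * (if μf p.1 t (a t) = j then 1 else 0) *
          (r t (a t) - r t j) ≤ ∑ _j : A, S := Finset.sum_le_sum fun j _ => hbound j
      _ = (Fintype.card A) * S := by
          rw [Finset.sum_const, Finset.card_univ, nsmul_eq_mul]
  · -- part (ii)
    by_cases hA1 : Fintype.card A = 1
    · -- one action: the regret is identically zero
      have hsub : Subsingleton A := Fintype.card_le_one_iff_subsingleton.mp (le_of_eq hA1)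
      refine ⟨fun _ _ _ _ => (Fintype.card A : ℝ)⁻¹, ?_, ?_⟩
      · intro t h past
        constructor
        · intro j; positivity
        · simp [Finset.sum_const, Finset.card_univ]
      · intro r hr
        have hz : ∀ a : Fin T → A,
            (H.sup' hH fun p => ∑ t, fv p.2 t (a t) *
              (r t (transcriptPrefix a t) (a t) -
                r t (transcriptPrefix a t) (μf p.1 t (a t)))) = 0 := by
          intro a
          have hzz : ∀ p ∈ H, (∑ t, fv p.2 t (a t) *
              (r t (transcriptPrefix a t) (a t) -
                r t (transcriptPrefix a t) (μf p.1 t (a t)))) = 0 := by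
            intro p _
            apply Finset.sum_eq_zero
            intro t _
            have he : μf p.1 t (a t) = a t := Subsingleton.elim _ _
            rw [he]
            simp
          rw [Finset.sup'_congr hH rfl hzz]
          exact Finset.sup'_const hH 0
        calc ∑ a : Fin T → A, transcriptProb (playOf (fun _ _ _ _ =>
              (Fintype.card A : ℝ)⁻¹) r) a *
              (H.sup' hH fun p => ∑ t, fv p.2 t (a t) *
                (r t (transcriptPrefix a t) (a t) -
                  r t (transcriptPrefix a t) (μf p.1 t (a t))))
            = 0 := by
              apply Finset.sum_eq_zero
              intro a _
              rw [hz a, mul_zero]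
          _ ≤ _ := hRHS0
    · -- at least two actions
      have hA2 : 2 ≤ Fintype.card A := by
        rcases Nat.lt_or_ge (Fintype.card A) 2 with h | h
        · interval_cases h' : Fintype.card A <;> omega
        · exact h
      set N' : ℝ := (Fintype.card A : ℝ) * (H.card : ℝ) with hN'
      have hHcard0 : (0:ℝ) < (H.card : ℝ) := by exact_mod_cast hHcard1
      have hN2 : (2:ℝ) ≤ N' := by
        rw [hN']
        calc (2:ℝ) = 2 * 1 := by norm_num
        _ ≤ (Fintype.card A : ℝ) * (H.card : ℝ) := by
            apply mul_le_mul
            · exact_mod_cast hA2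
            · exact_mod_cast hHcard1
            · norm_num
            · positivity
      have hlogN : 0 < Real.log N' := Real.log_pos (by linarith)
      have hlogsplit : Real.log N' = Real.log (Fintype.card A) + Real.log H.card := by
        rw [hN', Real.log_mul (by positivity) (by positivity)]
      have hsqrtfinal : Real.sqrt (T * Real.log N')
          = Real.sqrt (T * (Real.log (Fintype.card A) + Real.log H.card)) := by
        rw [hlogsplit]
      by_cases hT : Real.log N' ≤ (T : ℝ)
      · -- main branch: run the exponential-weights fixed-point strategy
        set η : ℝ := Real.sqrt (Real.log N' / T) with hη
        have hT0 : 0 < (T:ℝ) := lt_of_lt_of_le hlogN hT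
        have hTne : (T:ℝ) ≠ 0 := ne_of_gt hT0
        have hηpos : 0 < η := Real.sqrt_pos.mpr (div_pos hlogN hT0)
        have hηle1 : η ≤ 1 := by
          rw [hη, show (1:ℝ) = Real.sqrt 1 by rw [Real.sqrt_one]]
          apply Real.sqrt_le_sqrt
          rw [div_le_one hT0]
          exact hT
        have hηsq : η^2 = Real.log N' / T := Real.sq_sqrt (by positivity)
        set σ : ExpertStrategy A T := ewStrategy μf fv hfv0 H η with hσdef
        refine ⟨σ, ?_, ?_⟩
        · intro t h past
          exact ⟨(ewStrategy_spec μf fv hfv0 H η t h past).1,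
            (ewStrategy_spec μf fv hfv0 H η t h past).2.1⟩
        intro r hr
        -- abbreviations
        have hΦpos : ∀ (m : ℕ) (hm : m ≤ T) (h : Fin m → A),
            0 < ewPhi μf fv r H η m hm h :=
          fun m hm h => Finset.sum_pos (fun p _ => Real.exp_pos _) hH
        have hD1 : ∀ (t : Fin T) (h : Fin t.1 → A) (b : A) (p : ιM × ιF),
            |ewD μf fv r t h b p| ≤ 1 := by
          intro t h b p
          have h1 := hfv p.2 t b
          have h2 := hr t h b
          have h3 := hr t h (μf p.1 t b)
          simp only [Set.mem_Icc] at h1 h2 h3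
          rw [abs_le]
          unfold ewD
          constructor <;> nlinarith [h1.1, h1.2, h2.1, h2.2, h3.1, h3.2]
        have hplaynn : ∀ (t : Fin T) (h : Fin t.1 → A) (b : A), 0 ≤ playOf σ r t h b :=
          fun t h b => (ewStrategy_spec μf fv hfv0 H η t h _).1 b
        -- the one-step potential inequality
        have hstep : ∀ (t : Fin T) (h : Fin t.1 → A),
            ∑ b, playOf σ r t h b *
              ewPhi μf fv r H η (t.1+1) t.2 (Fin.snoc h b : Fin (t.1+1) → A)
            ≤ (1+η^2) * ewPhi μf fv r H η t.1 (le_of_lt t.2) h := by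
          intro t h
          set past : Fin t.1 → A → ℝ :=
            fun s => r ⟨s.1, s.2.trans t.2⟩ (historyPrefix h s) with hpast
          obtain ⟨hx0, hx1, hxfix⟩ := ewStrategy_spec μf fv hfv0 H η t h past
          set x : A → ℝ := ewStrategy μf fv hfv0 H η t h past with hxdef
          set w : (ιM × ιF) → ℝ := ewW μf fv η t h past with hwdef
          have hplay : ∀ b, playOf σ r t h b = x b := fun b => rfl
          have hwX : ∀ p, w p = Real.exp (η * ewX μf fv r t.1 (le_of_lt t.2) h p) :=
            fun p => rfl
          have hwpos : ∀ p, 0 < w p := fun p => Real.exp_pos _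
          have hΦsnoc : ∀ b : A, ewPhi μf fv r H η (t.1+1) t.2
              (Fin.snoc h b : Fin (t.1+1) → A)
              = ∑ p ∈ H, w p * Real.exp (η * ewD μf fv r t h b p) := by
            intro b
            unfold ewPhi
            apply Finset.sum_congr rfl
            intro p _
            rw [ewX_snoc μf fv r t h b p, mul_add, Real.exp_add, hwX p]
          have hΦt : ewPhi μf fv r H η t.1 (le_of_lt t.2) h = ∑ p ∈ H, w p := by
            unfold ewPhi
            exact Finset.sum_congr rfl fun p _ => (hwX p).symm
          -- the fixed point kills the linear term
          have key1 : ∀ b : A, ∑ p ∈ H, w p * ewD μf fv r t h b p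
              = (∑ j, ewM μf fv H η t h past b j) * r t h b
                - ∑ j, ewM μf fv H η t h past b j * r t h j := by
            intro b
            have e1 : ∑ j, ewM μf fv H η t h past b j = ∑ p ∈ H, w p * fv p.2 t b := by
              unfold ewM
              rw [Finset.sum_comm]
              apply Finset.sum_congr rfl
              intro p _
              rw [← Finset.mul_sum]
              congr 1
              rw [← Finset.mul_sum]
              rw [Finset.sum_ite_eq Finset.univ (μf p.1 t b) (fun _ => (1:ℝ))]
              simp
            have e2 : ∑ j, ewM μf fv H η t h past b j * r t h j
                = ∑ p ∈ H, w p * (fv p.2 t b * r t h (μf p.1 t b)) := by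
              unfold ewM
              have e21 : ∀ j : A, (∑ p ∈ H, w p * (fv p.2 t b *
                  (if μf p.1 t b = j then 1 else 0))) * r t h j
                  = ∑ p ∈ H, w p * (fv p.2 t b *
                      (if μf p.1 t b = j then r t h j else 0)) := by
                intro j
                rw [Finset.sum_mul]
                apply Finset.sum_congr rfl
                intro p _
                by_cases hc : μf p.1 t b = j <;> simp [hc] <;> ring
              rw [Finset.sum_congr rfl fun j _ => e21 j]
              rw [Finset.sum_comm]
              apply Finset.sum_congr rfl
              intro p _
              rw [← Finset.mul_sum]
              congr 1
              rw [← Finset.mul_sum]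
              congr 1
              rw [Finset.sum_ite_eq Finset.univ (μf p.1 t b) (fun j => r t h j)]
              simp
            calc ∑ p ∈ H, w p * ewD μf fv r t h b p
                = ∑ p ∈ H, ((w p * fv p.2 t b) * r t h b
                    - w p * (fv p.2 t b * r t h (μf p.1 t b))) := by
                  apply Finset.sum_congr rfl
                  intro p _
                  unfold ewD
                  ring
              _ = (∑ p ∈ H, w p * fv p.2 t b) * r t h b
                    - ∑ p ∈ H, w p * (fv p.2 t b * r t h (μf p.1 t b)) := by
                  rw [Finset.sum_sub_distrib, Finset.sum_mul]
              _ = _ := by rw [← e1, ← e2]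
          have hzero : ∑ b, x b * (∑ p ∈ H, w p * ewD μf fv r t h b p) = 0 := by
            have hz1 : ∀ b : A, x b * (∑ p ∈ H, w p * ewD μf fv r t h b p)
                = (x b * (∑ j, ewM μf fv H η t h past b j)) * r t h b
                  - ∑ j, x b * (ewM μf fv H η t h past b j * r t h j) := by
              intro b
              rw [key1 b, mul_sub, ← Finset.mul_sum]
              ring
            rw [Finset.sum_congr rfl fun b _ => hz1 b, Finset.sum_sub_distrib]
            have hz2 : ∑ b : A, ∑ j : A, x b * (ewM μf fv H η t h past b j * r t h j)
                = ∑ j : A, (x j * (∑ i, ewM μf fv H η t h past j i)) * r t h j := by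
              rw [Finset.sum_comm]
              apply Finset.sum_congr rfl
              intro j _
              rw [hxfix j, Finset.sum_mul]
              apply Finset.sum_congr rfl
              intro b _
              ring
            rw [hz2]
            exact sub_self _
          -- putting the step together
          calc ∑ b, playOf σ r t h b *
                ewPhi μf fv r H η (t.1+1) t.2 (Fin.snoc h b : Fin (t.1+1) → A)
              = ∑ b, x b * ∑ p ∈ H, w p * Real.exp (η * ewD μf fv r t h b p) := by
                apply Finset.sum_congr rfl
                intro b _
                rw [hplay b, hΦsnoc b]
            _ ≤ ∑ b, x b * ∑ p ∈ H, w p * (1 + η * ewD μf fv r t h b p + η^2) := by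
                apply Finset.sum_le_sum
                intro b _
                apply mul_le_mul_of_nonneg_left _ (hx0 b)
                apply Finset.sum_le_sum
                intro p hp
                apply mul_le_mul_of_nonneg_left _ (hwpos p).le
                have habs : |η * ewD μf fv r t h b p| ≤ 1 := by
                  rw [abs_mul, abs_of_nonneg hηpos.le]
                  exact mul_le_one₀ hηle1 (abs_nonneg _) (hD1 t h b p)
                have hq := exp_le_quadratic habs
                have hsq : (η * ewD μf fv r t h b p)^2 ≤ η^2 := by
                  rw [mul_pow]
                  have hD2 : (ewD μf fv r t h b p)^2 ≤ 1 := by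
                    have := hD1 t h b p
                    nlinarith [sq_abs (ewD μf fv r t h b p), abs_nonneg (ewD μf fv r t h b p)]
                  nlinarith [sq_nonneg η]
                linarith
            _ = ∑ b, x b * ((1+η^2) * (∑ p ∈ H, w p)
                  + η * ∑ p ∈ H, w p * ewD μf fv r t h b p) := by
                apply Finset.sum_congr rfl
                intro b _
                congr 1
                calc ∑ p ∈ H, w p * (1 + η * ewD μf fv r t h b p + η^2)
                    = ∑ p ∈ H, ((1+η^2) * w p + η * (w p * ewD μf fv r t h b p)) := by
                      apply Finset.sum_congr rfl
                      intro p _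
                      ring
                  _ = (1+η^2) * (∑ p ∈ H, w p)
                        + η * ∑ p ∈ H, w p * ewD μf fv r t h b p := by
                      rw [Finset.sum_add_distrib, ← Finset.mul_sum, ← Finset.mul_sum]
            _ = (1+η^2) * (∑ p ∈ H, w p) * (∑ b, x b)
                  + η * ∑ b, x b * (∑ p ∈ H, w p * ewD μf fv r t h b p) := by
                rw [Finset.sum_congr rfl fun b _ => mul_add (x b) _ _,
                  Finset.sum_add_distrib]
                congr 1
                · rw [← Finset.sum_mul]
                  ring
                · rw [Finset.mul_sum]
                  apply Finset.sum_congr rfl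
                  intro b _
                  ring
            _ = (1+η^2) * ewPhi μf fv r H η t.1 (le_of_lt t.2) h := by
                rw [hx1, hzero, hΦt]
                ring
        -- apply the chain rule
        have hchain := chain_le T (playOf σ r) hplaynn
          (fun m hm h => ewPhi μf fv r H η m hm h) (1+η^2) (by positivity) hstep
        have hΦ0 : ewPhi μf fv r H η 0 (Nat.zero_le T) default = H.card := by
          unfold ewPhi ewX
          simp
        rw [hΦ0] at hchain
        have hchain' : ∑ a : Fin T → A, transcriptProb (playOf σ r) a *
            ewPhi μf fv r H η T le_rfl a ≤ (1+η^2)^T * H.card := by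
          unfold transcriptProb
          exact hchain
        -- pointwise regret bound via the potential
        have hRphi : ∀ a : Fin T → A,
            (H.sup' hH fun p => ∑ t, fv p.2 t (a t) *
              (r t (transcriptPrefix a t) (a t) -
                r t (transcriptPrefix a t) (μf p.1 t (a t))))
            ≤ (1/η) * Real.log (ewPhi μf fv r H η T le_rfl a) := by
          intro a
          apply Finset.sup'_le
          intro p hp
          have hXeq : (∑ t, fv p.2 t (a t) *
              (r t (transcriptPrefix a t) (a t) -
                r t (transcriptPrefix a t) (μf p.1 t (a t))))
              = ewX μf fv r T le_rfl a p := rfl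
          rw [hXeq]
          have h1 : Real.exp (η * ewX μf fv r T le_rfl a p)
              ≤ ewPhi μf fv r H η T le_rfl a := by
            unfold ewPhi
            exact Finset.single_le_sum (f := fun q => Real.exp (η * ewX μf fv r T le_rfl a q))
              (fun q _ => (Real.exp_pos _).le) hp
          have h2 : η * ewX μf fv r T le_rfl a p
              ≤ Real.log (ewPhi μf fv r H η T le_rfl a) :=
            (Real.le_log_iff_exp_le (hΦpos T le_rfl a)).mpr h1
          have h3 := mul_le_mul_of_nonneg_left h2 (inv_nonneg.mpr hηpos.le)
          rw [← mul_assoc, inv_mul_cancel₀ hηpos.ne', one_mul] at h3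
          rw [one_div]
          exact h3
        -- probabilities
        have hprob1 : ∑ a : Fin T → A, transcriptProb (playOf σ r) a = 1 := by
          apply chain_eq_one T (playOf σ r)
          intro t h
          exact (ewStrategy_spec μf fv hfv0 H η t h _).2.1
        have hprobnn : ∀ a : Fin T → A, 0 ≤ transcriptProb (playOf σ r) a :=
          fun a => Finset.prod_nonneg fun t _ => hplaynn t _ _
        -- Jensen via weighted AM-GM
        have hjensen : ∑ a : Fin T → A, transcriptProb (playOf σ r) a *
            Real.log (ewPhi μf fv r H η T le_rfl a)
            ≤ Real.log ((1+η^2)^T * H.card) := by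
          have hgm := Real.geom_mean_le_arith_mean_weighted Finset.univ
            (fun a : Fin T → A => transcriptProb (playOf σ r) a)
            (fun a : Fin T → A => ewPhi μf fv r H η T le_rfl a)
            (fun a _ => hprobnn a) hprob1 (fun a _ => (hΦpos T le_rfl a).le)
          have hprodpos : 0 < ∏ a : Fin T → A,
              (ewPhi μf fv r H η T le_rfl a) ^ (transcriptProb (playOf σ r) a) :=
            Finset.prod_pos fun a _ => Real.rpow_pos_of_pos (hΦpos T le_rfl a) _
          have hlogprod : Real.log (∏ a : Fin T → A,
              (ewPhi μf fv r H η T le_rfl a) ^ (transcriptProb (playOf σ r) a))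
              = ∑ a : Fin T → A, transcriptProb (playOf σ r) a *
                  Real.log (ewPhi μf fv r H η T le_rfl a) := by
            rw [Real.log_prod (fun a _ =>
              (Real.rpow_pos_of_pos (hΦpos T le_rfl a) _).ne')]
            apply Finset.sum_congr rfl
            intro a _
            rw [Real.log_rpow (hΦpos T le_rfl a)]
          rw [← hlogprod]
          apply Real.log_le_log hprodpos
          calc ∏ a : Fin T → A,
              (ewPhi μf fv r H η T le_rfl a) ^ (transcriptProb (playOf σ r) a)
              ≤ ∑ a : Fin T → A, transcriptProb (playOf σ r) a *
                  ewPhi μf fv r H η T le_rfl a := hgm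
            _ ≤ (1+η^2)^T * H.card := hchain'
        -- final arithmetic
        have hfinal1 : Real.log ((1+η^2)^T * H.card) ≤ η^2 * T + Real.log N' := by
          have hHc : (0:ℝ) < ((1+η^2):ℝ)^T := by positivity
          rw [Real.log_mul hHc.ne' (by positivity : (H.card:ℝ) ≠ 0)]
          have hlp : Real.log ((1+η^2)^T) = T * Real.log (1+η^2) := by
            rw [Real.log_pow]
          have hlog2 : Real.log (1+η^2) ≤ η^2 := by
            have := Real.log_le_sub_one_of_pos (by positivity : (0:ℝ) < 1+η^2)
            linarith
          have hlogH : Real.log H.card ≤ Real.log N' := by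
            rw [hlogsplit]
            have : 0 ≤ Real.log (Fintype.card A) := by
              apply Real.log_nonneg
              exact_mod_cast hcard1
            linarith
          have hTn : (0:ℝ) ≤ T := Nat.cast_nonneg T
          calc Real.log ((1+η^2)^T) + Real.log H.card
              ≤ T * η^2 + Real.log N' := by
                rw [hlp]
                have := mul_le_mul_of_nonneg_left hlog2 hTn
                linarith
            _ = η^2 * T + Real.log N' := by ring
        -- the key square-root computation
        have hsqrtTN : 0 ≤ (T:ℝ) * Real.log N' := by positivity
        have hηT : η * T = Real.sqrt (T * Real.log N') := by
          have h1 : Real.sqrt (T * Real.log N') = Real.sqrt (Real.log N' / T) *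
              Real.sqrt (T^2) := by
            rw [← Real.sqrt_mul (by positivity)]
            congr 1
            field_simp
          rw [hη, h1, Real.sqrt_sq hT0.le]
        have hlogη : Real.log N' / η = Real.sqrt (T * Real.log N') := by
          have h1 : Real.sqrt (T * Real.log N') * η = Real.log N' := by
            rw [hη, ← Real.sqrt_mul hsqrtTN]
            have h2 : (T:ℝ) * Real.log N' * (Real.log N' / T) = (Real.log N')^2 := by
              field_simp
            rw [h2, Real.sqrt_sq hlogN.le]
          rw [div_eq_iff hηpos.ne']
          exact h1.symm
        -- assemble
        calc ∑ a : Fin T → A, transcriptProb (playOf σ r) a *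
              (H.sup' hH fun p => ∑ t, fv p.2 t (a t) *
                (r t (transcriptPrefix a t) (a t) -
                  r t (transcriptPrefix a t) (μf p.1 t (a t))))
            ≤ ∑ a : Fin T → A, transcriptProb (playOf σ r) a *
              ((1/η) * Real.log (ewPhi μf fv r H η T le_rfl a)) := by
              apply Finset.sum_le_sum
              intro a _
              exact mul_le_mul_of_nonneg_left (hRphi a) (hprobnn a)
          _ = (1/η) * ∑ a : Fin T → A, transcriptProb (playOf σ r) a *
              Real.log (ewPhi μf fv r H η T le_rfl a) := by
              rw [Finset.mul_sum]
              apply Finset.sum_congr rfl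
              intro a _
              ring
          _ ≤ (1/η) * (η^2 * T + Real.log N') := by
              apply mul_le_mul_of_nonneg_left _ (by positivity)
              exact le_trans hjensen hfinal1
          _ = η * T + Real.log N' / η := by
              field_simp
          _ = 2 * Real.sqrt (T * Real.log N') := by
              rw [hηT, hlogη]
              ring
          _ = 2 * Real.sqrt (T * (Real.log (Fintype.card A) + Real.log H.card)) := by
              rw [hsqrtfinal]
          _ ≤ 4 * (Fintype.card A) *
              Real.sqrt (T * (Real.log (Fintype.card A) + Real.log H.card)) := by
              have h4 : (2:ℝ) ≤ 4 * (Fintype.card A : ℝ) := by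
                have : (1:ℝ) ≤ (Fintype.card A : ℝ) := by exact_mod_cast hcard1
                linarith
              nlinarith [Real.sqrt_nonneg (T * (Real.log (Fintype.card A) +
                Real.log H.card))]
      · -- degenerate branch : T < log N', the trivial bound T suffices
        push_neg at hT
        have hT' : (T:ℝ) ≤ Real.sqrt (T * Real.log N') := by
          have h0 : (0:ℝ) ≤ T := Nat.cast_nonneg T
          rw [Real.sqrt_mul h0]
          calc (T:ℝ) = Real.sqrt T * Real.sqrt T := (Real.mul_self_sqrt h0).symm
          _ ≤ Real.sqrt T * Real.sqrt (Real.log N') := by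
              apply mul_le_mul_of_nonneg_left _ (Real.sqrt_nonneg _)
              exact Real.sqrt_le_sqrt hT.le
        refine ⟨fun _ _ _ _ => (Fintype.card A : ℝ)⁻¹, ?_, ?_⟩
        · intro t h past
          constructor
          · intro j; positivity
          · simp [Finset.sum_const, Finset.card_univ]
        · intro r hr
          have hrows : ∀ (t : Fin T) (h : Fin t.1 → A),
              ∑ b, playOf (fun _ _ _ _ => (Fintype.card A : ℝ)⁻¹) r t h b = 1 := by
            intro t h
            simp [playOf, Finset.sum_const, Finset.card_univ]
          have hsum1 : ∑ a : Fin T → A,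
              transcriptProb (playOf (fun _ _ _ _ => (Fintype.card A : ℝ)⁻¹) r) a = 1 :=
            chain_eq_one T (playOf (fun _ _ _ _ => (Fintype.card A : ℝ)⁻¹) r) hrows
          have hprobnn : ∀ a : Fin T → A,
              0 ≤ transcriptProb (playOf (fun _ _ _ _ => (Fintype.card A : ℝ)⁻¹) r) a := by
            intro a
            apply Finset.prod_nonneg
            intro t _
            show (0:ℝ) ≤ (Fintype.card A : ℝ)⁻¹
            positivity
          calc ∑ a : Fin T → A, transcriptProb (playOf (fun _ _ _ _ =>
                (Fintype.card A : ℝ)⁻¹) r) a *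
                (H.sup' hH fun p => ∑ t, fv p.2 t (a t) *
                  (r t (transcriptPrefix a t) (a t) -
                    r t (transcriptPrefix a t) (μf p.1 t (a t))))
              ≤ ∑ a : Fin T → A, transcriptProb (playOf (fun _ _ _ _ =>
                (Fintype.card A : ℝ)⁻¹) r) a * (T : ℝ) := by
                apply Finset.sum_le_sum
                intro a _
                exact mul_le_mul_of_nonneg_left
                  (regret_le_T μf fv hfv H hH a r hr) (hprobnn a)
            _ = (T : ℝ) := by rw [← Finset.sum_mul, hsum1, one_mul]
            _ ≤ Real.sqrt (T * Real.log N') := hT'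
            _ = Real.sqrt (T * (Real.log (Fintype.card A) + Real.log H.card)) :=
                hsqrtfinal
            _ ≤ 4 * (Fintype.card A) *
                Real.sqrt (T * (Real.log (Fintype.card A) + Real.log H.card)) := by
                have h4 : (1:ℝ) ≤ 4 * (Fintype.card A : ℝ) := by
                  have : (1:ℝ) ≤ (Fintype.card A : ℝ) := by exact_mod_cast hcard1
                  linarith
                nlinarith [Real.sqrt_nonneg (T * (Real.log (Fintype.card A) +
                  Real.log H.card))]

end
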